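/- For every N ≥ 2 and every KC-PMI P on N parties: (i) the inclusion-minimal elements of the set of subsystems with essential β-sets, and the inclusion-minimal elements of the set of subsystems with positive β-sets, both coincide with the set of subsystems with completely essential β-sets; (ii) the upward closures under inclusion (among subsystems of size ≥ 2) of the sets of subsystems with completely essential β-sets, with essential β-sets, and with positive β-sets all equal the set of subsystems whose β-set is positive or partial; (iii) the set of subsystems with partial β-sets equals the upward closure of the set with positive β-sets minus the set with positive β-sets; (iv) the set of subsystems with vanishing β-sets equals the complement (within subsystems of size ≥ 2) of the upward closure of the set with positive β-sets. -/
import Mathlib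


namespace HEC

/-- The parties `⟦N⟧ = {0,1,…,N}`, where `0` is the purifier. -/
abbrev Party (N : ℕ) := Fin (N + 1)

/-- A collection of parties. -/
abbrev PSet (N : ℕ) := Finset (Party N)

/-- MI instances: unordered pairs of subsets of parties. -/
abbrev MI (N : ℕ) := Sym2 (PSet N)

/-- `m` is an MI instance, i.e. an unordered pair of disjoint nonempty subsets of `⟦N⟧`. -/
def IsMIInst {N : ℕ} (m : MI N) : Prop :=
  ∃ Y Z : PSet N, m = s(Y, Z) ∧ Y.Nonempty ∧ Z.Nonempty ∧ Disjoint Y Z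

/-- The MI-poset order: `{Y,Z} ⪯ {Y',Z'}` iff (`Y ⊆ Y'` and `Z ⊆ Z'`) or
(`Y ⊆ Z'` and `Z ⊆ Y'`).  (The two cases are absorbed by the existential over
representatives of the unordered pairs.) -/
def MIle {N : ℕ} (m m' : MI N) : Prop :=
  ∃ Y Z Y' Z' : PSet N, m = s(Y, Z) ∧ m' = s(Y', Z') ∧ Y ⊆ Y' ∧ Z ⊆ Z'

/-- An `N`-party entropy vector, extended to all subsets of `⟦N⟧` by the purification
convention: `S ∅ = 0` and `S Y = S (⟦N⟧ \ Y)` whenever `0 ∈ Y`. -/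
structure EntropyVec (N : ℕ) where
  S : PSet N → ℝ
  S_empty : S ∅ = 0
  S_purify : ∀ Y : PSet N, (0 : Party N) ∈ Y → S Y = S (Finset.univ \ Y)

/-- Mutual information `I(Y:Z) = S_Y + S_Z - S_{Y∪Z}`. -/
def EntropyVec.I {N : ℕ} (v : EntropyVec N) (Y Z : PSet N) : ℝ :=
  v.S Y + v.S Z - v.S (Y ∪ Z)

/-- Membership in the subadditivity cone: `I(Y:Z) ≥ 0` for every MI instance. -/
def EntropyVec.InSAC {N : ℕ} (v : EntropyVec N) : Prop :=
  ∀ Y Z : PSet N, Y.Nonempty → Z.Nonempty → Disjoint Y Z → 0 ≤ v.I Y Z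

/-- The pattern of marginal independence of `v`: the MI instances vanishing on `v`. -/
def EntropyVec.PMI {N : ℕ} (v : EntropyVec N) : Set (MI N) :=
  {m | ∃ Y Z : PSet N, m = s(Y, Z) ∧ Y.Nonempty ∧ Z.Nonempty ∧ Disjoint Y Z ∧ v.I Y Z = 0}

/-- `P` is a down-set in the MI-poset. -/
def IsMIDownSet {N : ℕ} (P : Set (MI N)) : Prop :=
  ∀ m m' : MI N, IsMIInst m → m' ∈ P → MIle m m' → m ∈ P

/-- `P` is a KC-PMI: the PMI of some entropy vector in the subadditivity cone,
which moreover is a down-set in the MI-poset. -/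
def IsKCPMI {N : ℕ} (P : Set (MI N)) : Prop :=
  (∃ v : EntropyVec N, v.InSAC ∧ P = v.PMI) ∧ IsMIDownSet P

/-- The β-set of `X`: all MI instances `{Y,Z}` with `Y ∪ Z = X`. -/
def betaSet {N : ℕ} (X : PSet N) : Set (MI N) :=
  {m | ∃ Y Z : PSet N, m = s(Y, Z) ∧ Y.Nonempty ∧ Z.Nonempty ∧ Disjoint Y Z ∧ Y ∪ Z = X}

/-- The antichain `A` of minimal elements of `P̄ = M_N ∖ P`. -/
def minimalMI {N : ℕ} (P : Set (MI N)) : Set (MI N) :=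
  {m | IsMIInst m ∧ m ∉ P ∧ ∀ m' : MI N, IsMIInst m' → m' ∉ P → MIle m' m → m' = m}

/-- `β(X)` is positive: `β(X) ⊆ P̄`. -/
def BPos {N : ℕ} (P : Set (MI N)) (X : PSet N) : Prop :=
  ∀ m ∈ betaSet X, m ∉ P

/-- `β(X)` is vanishing: `β(X) ⊆ P`. -/
def BVan {N : ℕ} (P : Set (MI N)) (X : PSet N) : Prop :=
  betaSet X ⊆ P

/-- `β(X)` is partial: it has elements both in `P` and in `P̄`. -/
def BPart {N : ℕ} (P : Set (MI N)) (X : PSet N) : Prop :=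
  (∃ m ∈ betaSet X, m ∈ P) ∧ (∃ m ∈ betaSet X, m ∉ P)

/-- `β(X)` is essential: `β(X) ∩ A ≠ ∅`. -/
def BEss {N : ℕ} (P : Set (MI N)) (X : PSet N) : Prop :=
  ∃ m ∈ betaSet X, m ∈ minimalMI P

/-- `β(X)` is completely essential: `β(X) ⊆ A`. -/
def BCEss {N : ℕ} (P : Set (MI N)) (X : PSet N) : Prop :=
  betaSet X ⊆ minimalMI P

/-- `β(X)` is non-essential: `β(X) ∩ A = ∅`. -/
def BNEss {N : ℕ} (P : Set (MI N)) (X : PSet N) : Prop :=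
  ∀ m ∈ betaSet X, m ∉ minimalMI P

/-- `pos_<(Y)`: the proper subsystems `Z ⊊ Y` with `|Z| ≥ 2` and `β(Z)` positive. -/
def posBelow {N : ℕ} (P : Set (MI N)) (Y : PSet N) : Set (PSet N) :=
  {Z | Z ⊂ Y ∧ 2 ≤ Z.card ∧ BPos P Z}

/-- `Max(pos_<(Y))`: the inclusion-maximal elements of `pos_<(Y)`. -/
def maxPosBelow {N : ℕ} (P : Set (MI N)) (Y : PSet N) : Set (PSet N) :=
  {Z | Z ∈ posBelow P Y ∧ ∀ Z' ∈ posBelow P Y, Z ⊆ Z' → Z = Z'}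

/-- The MI instance `m = {Y,Z}` splits `X` if `X ∩ Y ≠ ∅` and `X ∩ Z ≠ ∅`. -/
def Splits {N : ℕ} (m : MI N) (X : PSet N) : Prop :=
  ∃ Y Z : PSet N, m = s(Y, Z) ∧ (X ∩ Y).Nonempty ∧ (X ∩ Z).Nonempty

/-- The hyperedges of the correlation hypergraph `H_P`: one hyperedge `e_X` for each
`X ⊆ ⟦N⟧` (with `|X| ≥ 2`) whose β-set is positive.  Vertices `v_ℓ` are identified
with the parties `ℓ ∈ ⟦N⟧`, and hyperedges with the corresponding subsystems. -/
def Hedge {N : ℕ} (P : Set (MI N)) : Set (PSet N) :=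
  {X | 2 ≤ X.card ∧ BPos P X}

/-- The hyperedges of the sub-hypergraph `H_Y`: the hyperedges `e_Z` with `Z ⊊ Y`. -/
def subEdges {N : ℕ} (P : Set (MI N)) (Y : PSet N) : Set (PSet N) :=
  {Z | Z ⊂ Y ∧ Z ∈ Hedge P}

/-- One step in a hypergraph with hyperedge set `E`: `a` and `b` lie in a common
hyperedge. -/
def hStep {N : ℕ} (E : Set (PSet N)) (a b : Party N) : Prop :=
  ∃ e ∈ E, a ∈ e ∧ b ∈ e

/-- Connectivity of the hypergraph with vertex set `V` and hyperedge set `E`: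
every two vertices are joined by a path (a one-vertex hypergraph is connected). -/
def hConn {N : ℕ} (V : PSet N) (E : Set (PSet N)) : Prop :=
  ∀ a ∈ V, ∀ b ∈ V, Relation.ReflTransGen (hStep E) a b

/-- The vertex set of the connected component of `a` in the hypergraph with
vertex set `V` and hyperedge set `E`. -/
def hComp {N : ℕ} (V : PSet N) (E : Set (PSet N)) (a : Party N) : Set (Party N) :=
  {b | b ∈ V ∧ Relation.ReflTransGen (hStep E) a b}

/-- A clique of the line graph `L_{H_P}`: a set of hyperedges of `H_P` which are
pairwise adjacent (distinct hyperedges being adjacent iff they intersect). -/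
def IsLineClique {N : ℕ} (P : Set (MI N)) (Q : Set (PSet N)) : Prop :=
  Q ⊆ Hedge P ∧ ∀ e ∈ Q, ∀ f ∈ Q, e ≠ f → (e ∩ f).Nonempty

/-- A max-clique of the line graph `L_{H_P}`: a (nonempty) clique which is maximal
under inclusion. -/
def IsMaxClique {N : ℕ} (P : Set (MI N)) (Q : Set (PSet N)) : Prop :=
  Q.Nonempty ∧ IsLineClique P Q ∧ ∀ Q' : Set (PSet N), IsLineClique P Q' → Q ⊆ Q' → Q = Q'

/-- `Q^∩`: the intersection of the hyperedges in `Q`, viewed as sets of vertices. -/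
def qInter {N : ℕ} (Q : Set (PSet N)) : Set (Party N) :=
  {ℓ | ∀ e ∈ Q, ℓ ∈ e}

section Aux
variable {N : ℕ}

lemma isMIInst_mk {Y Z : PSet N} (hY : Y.Nonempty) (hZ : Z.Nonempty) (hd : Disjoint Y Z) :
    IsMIInst (s(Y,Z)) := ⟨Y, Z, rfl, hY, hZ, hd⟩

lemma isMIInst_mk_iff {Y Z : PSet N} :
    IsMIInst (s(Y,Z)) ↔ Y.Nonempty ∧ Z.Nonempty ∧ Disjoint Y Z := by
  constructor
  · rintro ⟨U, V, h, hU, hV, hd⟩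
    rw [Sym2.eq_iff] at h
    rcases h with ⟨rfl, rfl⟩ | ⟨rfl, rfl⟩
    · exact ⟨hU, hV, hd⟩
    · exact ⟨hV, hU, hd.symm⟩
  · rintro ⟨hY, hZ, hd⟩; exact ⟨Y, Z, rfl, hY, hZ, hd⟩

lemma mIle_mk_iff {Y Z Y' Z' : PSet N} :
    MIle s(Y,Z) s(Y',Z') ↔ (Y ⊆ Y' ∧ Z ⊆ Z') ∨ (Y ⊆ Z' ∧ Z ⊆ Y') := by
  constructor
  · rintro ⟨U, V, U', V', h1, h2, h3, h4⟩
    rw [Sym2.eq_iff] at h1 h2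
    rcases h1 with ⟨rfl, rfl⟩ | ⟨rfl, rfl⟩ <;> rcases h2 with ⟨rfl, rfl⟩ | ⟨rfl, rfl⟩ <;> tauto
  · rintro (⟨h1, h2⟩ | ⟨h1, h2⟩)
    · exact ⟨Y, Z, Y', Z', rfl, rfl, h1, h2⟩
    · exact ⟨Y, Z, Z', Y', rfl, Sym2.eq_swap, h1, h2⟩

lemma mem_betaSet_mk_iff {X Y Z : PSet N} :
    s(Y,Z) ∈ betaSet X ↔ Y.Nonempty ∧ Z.Nonempty ∧ Disjoint Y Z ∧ Y ∪ Z = X := by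
  constructor
  · rintro ⟨U, V, h, hU, hV, hd, hun⟩
    rw [Sym2.eq_iff] at h
    rcases h with ⟨rfl, rfl⟩ | ⟨rfl, rfl⟩
    · exact ⟨hU, hV, hd, hun⟩
    · exact ⟨hV, hU, hd.symm, by rwa [Finset.union_comm]⟩
  · rintro ⟨hY, hZ, hd, hun⟩; exact ⟨Y, Z, rfl, hY, hZ, hd, hun⟩

lemma I_comm (v : EntropyVec N) (Y Z : PSet N) : v.I Y Z = v.I Z Y := by
  unfold EntropyVec.I; rw [Finset.union_comm]; ring

lemma mem_PMI_mk_iff (v : EntropyVec N) {Y Z : PSet N} :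
    s(Y,Z) ∈ v.PMI ↔ Y.Nonempty ∧ Z.Nonempty ∧ Disjoint Y Z ∧ v.I Y Z = 0 := by
  constructor
  · rintro ⟨U, V, h, hU, hV, hd, hI⟩
    rw [Sym2.eq_iff] at h
    rcases h with ⟨rfl, rfl⟩ | ⟨rfl, rfl⟩
    · exact ⟨hU, hV, hd, hI⟩
    · exact ⟨hV, hU, hd.symm, by rwa [I_comm]⟩
  · rintro ⟨hY, hZ, hd, hI⟩; exact ⟨Y, Z, rfl, hY, hZ, hd, hI⟩

lemma card_lt_of_ne {U V Y Z : PSet N} (hU : U ⊆ Y) (hV : V ⊆ Z) (h : ¬(U = Y ∧ V = Z)) :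
    U.card + V.card < Y.card + Z.card := by
  have h1 := Finset.card_le_card hU
  have h2 := Finset.card_le_card hV
  rcases lt_or_eq_of_le h1 with h1' | h1'
  · omega
  rcases lt_or_eq_of_le h2 with h2' | h2'
  · omega
  exact absurd ⟨Finset.eq_of_subset_of_card_le hU h1'.ge,
    Finset.eq_of_subset_of_card_le hV h2'.ge⟩ h

lemma exists_minimal_below (P : Set (MI N)) :
    ∀ n : ℕ, ∀ Y Z : PSet N, Y.card + Z.card ≤ n → Y.Nonempty → Z.Nonempty → Disjoint Y Z →
      s(Y,Z) ∉ P → ∃ U V : PSet N, U.Nonempty ∧ V.Nonempty ∧ Disjoint U V ∧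
        s(U,V) ∈ minimalMI P ∧ U ⊆ Y ∧ V ⊆ Z := by
  intro n
  induction n with
  | zero =>
    intro Y Z h hY _ _ _
    have := hY.card_pos
    omega
  | succ n ih =>
    intro Y Z hc hY hZ hd hP
    by_cases hmin : ∀ m' : MI N, IsMIInst m' → m' ∉ P → MIle m' s(Y,Z) → m' = s(Y,Z)
    · exact ⟨Y, Z, hY, hZ, hd, ⟨isMIInst_mk hY hZ hd, hP, hmin⟩,
        Finset.Subset.refl _, Finset.Subset.refl _⟩
    · push_neg at hmin
      obtain ⟨m', hinst, hm'P, hle, hne⟩ := hmin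
      obtain ⟨U, V, rfl, hU, hV, hUV⟩ := hinst
      rcases mIle_mk_iff.mp hle with ⟨hUY, hVZ⟩ | ⟨hUZ, hVY⟩
      · have hlt : U.card + V.card < Y.card + Z.card := by
          apply card_lt_of_ne hUY hVZ
          rintro ⟨rfl, rfl⟩; exact hne rfl
        obtain ⟨U₀, V₀, h1, h2, h3, h4, h5, h6⟩ := ih U V (by omega) hU hV hUV hm'P
        exact ⟨U₀, V₀, h1, h2, h3, h4, h5.trans hUY, h6.trans hVZ⟩
      · have hlt : V.card + U.card < Y.card + Z.card := by
          apply card_lt_of_ne hVY hUZ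
          rintro ⟨rfl, rfl⟩; exact hne Sym2.eq_swap
        have hP' : s(V,U) ∉ P := by rwa [Sym2.eq_swap]
        obtain ⟨U₀, V₀, h1, h2, h3, h4, h5, h6⟩ := ih V U (by omega) hV hU hUV.symm hP'
        exact ⟨U₀, V₀, h1, h2, h3, h4, h5.trans hVY, h6.trans hUZ⟩

lemma minimal_inst {P : Set (MI N)} {Y Z : PSet N} (hm : s(Y,Z) ∈ minimalMI P) :
    Y.Nonempty ∧ Z.Nonempty ∧ Disjoint Y Z := isMIInst_mk_iff.mp hm.1

lemma minimal_mem_P {P : Set (MI N)} {Y Z U V : PSet N} (hm : s(Y,Z) ∈ minimalMI P)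
    (hU : U.Nonempty) (hV : V.Nonempty) (hUY : U ⊆ Y) (hVZ : V ⊆ Z)
    (hne : U ≠ Y ∨ V ≠ Z) : s(U,V) ∈ P := by
  obtain ⟨hY, hZ, hd⟩ := minimal_inst hm
  by_contra hP
  have hdUV : Disjoint U V := hd.mono hUY hVZ
  have h := hm.2.2 s(U,V) (isMIInst_mk hU hV hdUV) hP (mIle_mk_iff.mpr (Or.inl ⟨hUY, hVZ⟩))
  rw [Sym2.eq_iff] at h
  rcases h with ⟨h1, h2⟩ | ⟨h1, h2⟩
  · tauto
  · obtain ⟨x, hx⟩ := hU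
    exact (Finset.disjoint_left.mp hd (hUY hx)) (h1 ▸ hx)

lemma minimal_I_pos {v : EntropyVec N} (hv : v.InSAC) {Y Z : PSet N}
    (hm : s(Y,Z) ∈ minimalMI v.PMI) : 0 < v.I Y Z := by
  obtain ⟨hY, hZ, hd⟩ := minimal_inst hm
  rcases (hv Y Z hY hZ hd).lt_or_eq with h | h
  · exact h
  · exact absurd ((mem_PMI_mk_iff v).mpr ⟨hY, hZ, hd, h.symm⟩) hm.2.1

end Aux
section Aux2
variable {N : ℕ}

lemma degenerate_case {v : EntropyVec N} (hv : v.InSAC) {Y Z a b : PSet N}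
    (hm : s(Y,Z) ∈ minimalMI v.PMI) (ha : a.Nonempty) (hb : b.Nonempty)
    (hab : Disjoint a b) (hY : Y = a ∪ b) (hI : v.I a (b ∪ Z) = 0) : False := by
  obtain ⟨hYne, hZne, hdYZ⟩ := minimal_inst hm
  have hpos : 0 < v.I Y Z := minimal_I_pos hv hm
  have hbY : b ≠ Y := by
    intro h
    obtain ⟨x, hx⟩ := ha
    apply Finset.disjoint_left.mp hab hx
    rw [h, hY]
    exact Finset.mem_union_left _ hx
  have hbsub : b ⊆ Y := by rw [hY]; exact Finset.subset_union_right
  have hbZ : s(b,Z) ∈ v.PMI :=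
    minimal_mem_P hm hb hZne hbsub (Finset.Subset.refl _) (Or.inl hbY)
  have hIbZ : v.I b Z = 0 := ((mem_PMI_mk_iff v).mp hbZ).2.2.2
  have hSab : 0 ≤ v.I a b := hv a b ha hb hab
  have hu1 : a ∪ (b ∪ Z) = Y ∪ Z := by rw [hY, Finset.union_assoc]
  have hg : v.S Y = v.S (a ∪ b) := by rw [hY]
  unfold EntropyVec.I at hI hIbZ hSab hpos
  rw [hu1] at hI
  linarith

lemma inter_union_split {s t u : PSet N} (h : s ⊆ t ∪ u) : s = (s ∩ t) ∪ (s ∩ u) := by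
  ext x
  simp only [Finset.mem_union, Finset.mem_inter]
  constructor
  · intro hx
    rcases Finset.mem_union.mp (h hx) with h' | h'
    · exact Or.inl ⟨hx, h'⟩
    · exact Or.inr ⟨hx, h'⟩
  · rintro (⟨hx, _⟩ | ⟨hx, _⟩) <;> exact hx

lemma minimal_union_pos {v : EntropyVec N} (hv : v.InSAC) (hds : IsMIDownSet v.PMI)
    {Y Z : PSet N} (hm : s(Y,Z) ∈ minimalMI v.PMI) : BPos v.PMI (Y ∪ Z) := by
  intro m hmβ hmP
  obtain ⟨A, B, rfl, hA, hB, hdAB, hUn⟩ := hmβ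
  obtain ⟨hYne, hZne, hdYZ⟩ := minimal_inst hm
  have hpos : 0 < v.I Y Z := minimal_I_pos hv hm
  have hIAB : v.I A B = 0 := ((mem_PMI_mk_iff v).mp hmP).2.2.2
  have hUx : ∀ x : Party N, (x ∈ A ∨ x ∈ B) ↔ (x ∈ Y ∨ x ∈ Z) := fun x => by
    rw [← Finset.mem_union, ← Finset.mem_union, hUn]
  have hYab : Y = (Y ∩ A) ∪ (Y ∩ B) :=
    inter_union_split (by rw [hUn]; exact Finset.subset_union_left)
  have hZcd : Z = (Z ∩ A) ∪ (Z ∩ B) :=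
    inter_union_split (by rw [hUn]; exact Finset.subset_union_right)
  have hAac : A = (Y ∩ A) ∪ (Z ∩ A) := by
    rw [Finset.inter_comm Y A, Finset.inter_comm Z A]
    exact inter_union_split (by rw [← hUn]; exact Finset.subset_union_left)
  have hBbd : B = (Y ∩ B) ∪ (Z ∩ B) := by
    rw [Finset.inter_comm Y B, Finset.inter_comm Z B]
    exact inter_union_split (by rw [← hUn]; exact Finset.subset_union_right)
  have hdisj_cd : Disjoint (Z ∩ A) (Z ∩ B) :=
    hdAB.mono Finset.inter_subset_right Finset.inter_subset_right
  have hdisj_ab : Disjoint (Y ∩ A) (Y ∩ B) :=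
    hdAB.mono Finset.inter_subset_right Finset.inter_subset_right
  rcases (Y ∩ A).eq_empty_or_nonempty with ha | ha
  · -- a = ∅ :  A ⊆ Z,  Y ⊆ B
    have hAc : A = Z ∩ A := by conv_lhs => rw [hAac, ha, Finset.empty_union]
    have hbY : Y ∩ B = Y := by
      ext x
      simp only [Finset.mem_inter]
      constructor
      · rintro ⟨hx, _⟩; exact hx
      · intro hx
        refine ⟨hx, ?_⟩
        rcases (hUx x).mpr (Or.inl hx) with h' | h'
        · exact absurd (Finset.mem_inter.mpr ⟨hx, h'⟩) (by rw [ha]; exact Finset.notMem_empty x)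
        · exact h'
    rcases (Z ∩ B).eq_empty_or_nonempty with hd0 | hd0
    · -- d = ∅ : A = Z, B = Y, so I(Y:Z) = 0, contradiction
      have hZc : Z = Z ∩ A := by conv_lhs => rw [hZcd, hd0, Finset.union_empty]
      have hAZ : A = Z := by rw [hAc, ← hZc]
      have hBY : B = Y := by conv_lhs => rw [hBbd, hd0, Finset.union_empty, hbY]
      rw [hAZ, hBY, I_comm v Z Y] at hIAB
      linarith
    · -- d ≠ ∅ : degenerate case with roles (Z, Y, c, d)
      have hc : (Z ∩ A).Nonempty := by rw [← hAc]; exact hA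
      have hm' : s(Z,Y) ∈ minimalMI v.PMI := by rw [Sym2.eq_swap]; exact hm
      have hBrw : B = (Z ∩ B) ∪ Y := by conv_lhs => rw [hBbd, hbY, Finset.union_comm]
      rw [hAc, hBrw] at hIAB
      exact degenerate_case hv hm' hc hd0 hdisj_cd hZcd hIAB
  rcases (Y ∩ B).eq_empty_or_nonempty with hb | hb
  · -- b = ∅ : B ⊆ Z, Y ⊆ A
    have hBd : B = Z ∩ B := by conv_lhs => rw [hBbd, hb, Finset.empty_union]
    have haY : Y ∩ A = Y := by
      ext x
      simp only [Finset.mem_inter]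
      constructor
      · rintro ⟨hx, _⟩; exact hx
      · intro hx
        refine ⟨hx, ?_⟩
        rcases (hUx x).mpr (Or.inl hx) with h' | h'
        · exact h'
        · exact absurd (Finset.mem_inter.mpr ⟨hx, h'⟩) (by rw [hb]; exact Finset.notMem_empty x)
    have hd0 : (Z ∩ B).Nonempty := by rw [← hBd]; exact hB
    rcases (Z ∩ A).eq_empty_or_nonempty with hc0 | hc0
    · -- c = ∅ : A = Y, B = Z, direct contradiction
      have hAY : A = Y := by conv_lhs => rw [hAac, hc0, Finset.union_empty, haY]
      have hZd : Z = Z ∩ B := by conv_lhs => rw [hZcd, hc0, Finset.empty_union]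
      have hBZ : B = Z := by rw [hBd, ← hZd]
      rw [hAY, hBZ] at hIAB
      linarith
    · -- c ≠ ∅ : degenerate case with roles (Z, Y, d, c)
      have hm' : s(Z,Y) ∈ minimalMI v.PMI := by rw [Sym2.eq_swap]; exact hm
      have hZdc : Z = (Z ∩ B) ∪ (Z ∩ A) := by rw [Finset.union_comm]; exact hZcd
      have hArw : A = (Z ∩ A) ∪ Y := by conv_lhs => rw [hAac, haY, Finset.union_comm]
      rw [I_comm] at hIAB
      rw [hBd, hArw] at hIAB
      exact degenerate_case hv hm' hd0 hc0 hdisj_cd.symm hZdc hIAB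
  rcases (Z ∩ A).eq_empty_or_nonempty with hc0 | hc0
  · -- c = ∅ : A ⊆ Y, Z ⊆ B : degenerate with roles (Y, Z, a, b)
    have hAa : A = Y ∩ A := by conv_lhs => rw [hAac, hc0, Finset.union_empty]
    have hdZ : Z = Z ∩ B := by conv_lhs => rw [hZcd, hc0, Finset.empty_union]
    have hBrw : B = (Y ∩ B) ∪ Z := by conv_lhs => rw [hBbd, ← hdZ]
    rw [hAa, hBrw] at hIAB
    exact degenerate_case hv hm ha hb hdisj_ab hYab hIAB
  rcases (Z ∩ B).eq_empty_or_nonempty with hd0 | hd0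
  · -- d = ∅ : B ⊆ Y, Z ⊆ A : degenerate with roles (Y, Z, b, a)
    have hBb : B = Y ∩ B := by conv_lhs => rw [hBbd, hd0, Finset.union_empty]
    have hcZ : Z = Z ∩ A := by conv_lhs => rw [hZcd, hd0, Finset.union_empty]
    have hArw : A = (Y ∩ A) ∪ Z := by conv_lhs => rw [hAac, ← hcZ]
    have hYba : Y = (Y ∩ B) ∪ (Y ∩ A) := by rw [Finset.union_comm]; exact hYab
    rw [I_comm] at hIAB
    rw [hBb, hArw] at hIAB
    exact degenerate_case hv hm hb ha hdisj_ab.symm hYba hIAB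
  · -- main case: all four pieces nonempty
    have hcneZ : Z ∩ A ≠ Z := by
      intro h
      obtain ⟨x, hx⟩ := hd0
      have hxZA : x ∈ Z ∩ A := by rw [h]; exact (Finset.mem_inter.mp hx).1
      exact Finset.disjoint_left.mp hdAB (Finset.mem_inter.mp hxZA).2
        (Finset.mem_inter.mp hx).2
    have hbneY : Y ∩ B ≠ Y := by
      intro h
      obtain ⟨x, hx⟩ := ha
      have hxYB : x ∈ Y ∩ B := by rw [h]; exact (Finset.mem_inter.mp hx).1
      exact Finset.disjoint_left.mp hdAB (Finset.mem_inter.mp hx).2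
        (Finset.mem_inter.mp hxYB).2
    have e1 : v.I Y (Z ∩ A) = 0 := ((mem_PMI_mk_iff v).mp
      (minimal_mem_P hm hYne hc0 (Finset.Subset.refl _) Finset.inter_subset_left
        (Or.inr hcneZ))).2.2.2
    have e3 : v.I (Y ∩ B) (Z ∩ B) = 0 := ((mem_PMI_mk_iff v).mp
      (minimal_mem_P hm hb hd0 Finset.inter_subset_left Finset.inter_subset_left
        (Or.inl hbneY))).2.2.2
    have e4mem : s(A, Y ∩ B) ∈ v.PMI := by
      apply hds _ _ (isMIInst_mk hA hb (hdAB.mono_right Finset.inter_subset_right)) hmP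
      exact mIle_mk_iff.mpr (Or.inl ⟨Finset.Subset.refl _, Finset.inter_subset_right⟩)
    have e4 : v.I A (Y ∩ B) = 0 := ((mem_PMI_mk_iff v).mp e4mem).2.2.2
    have e5 : 0 ≤ v.I (Z ∩ A) (Z ∩ B) := hv _ _ hc0 hd0 hdisj_cd
    have g1 : A ∪ (Y ∩ B) = Y ∪ (Z ∩ A) := by
      ext x
      have h1 := hUx x
      simp only [Finset.mem_union, Finset.mem_inter] at *
      constructor
      · rintro (hxA | ⟨hxY, _⟩)
        · rcases h1.mp (Or.inl hxA) with h' | h'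
          · exact Or.inl h'
          · exact Or.inr ⟨h', hxA⟩
        · exact Or.inl hxY
      · rintro (hxY | ⟨_, hxA⟩)
        · rcases h1.mpr (Or.inl hxY) with h' | h'
          · exact Or.inl h'
          · exact Or.inr ⟨hxY, h'⟩
        · exact Or.inl hxA
    have gB : v.S B = v.S ((Y ∩ B) ∪ (Z ∩ B)) := by rw [← hBbd]
    have gZ : v.S ((Z ∩ A) ∪ (Z ∩ B)) = v.S Z := by rw [← hZcd]
    unfold EntropyVec.I at e1 e3 e4 e5 hIAB hpos
    rw [g1] at e4
    rw [hUn] at hIAB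
    rw [gZ] at e5
    linarith

end Aux2
section Aux3
variable {N : ℕ}

lemma betaSet_nonempty {X : PSet N} (h2 : 2 ≤ X.card) : (betaSet X).Nonempty := by
  obtain ⟨x, hx⟩ := Finset.card_pos.mp (by omega : 0 < X.card)
  refine ⟨s({x}, X.erase x), {x}, X.erase x, rfl, Finset.singleton_nonempty x, ?_, ?_, ?_⟩
  · rw [← Finset.card_pos, Finset.card_erase_of_mem hx]; omega
  · exact Finset.disjoint_singleton_left.mpr (Finset.notMem_erase x X)
  · rw [← Finset.insert_eq, Finset.insert_erase hx]

/-- Extending an instance on `Z ⊆ X` to an element of `β(X)` above it. -/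
lemma extend_beta {X Z U V : PSet N} (hZX : Z ⊆ X) (hU : U.Nonempty) (hV : V.Nonempty)
    (hdUV : Disjoint U V) (hUn : U ∪ V = Z) :
    s(U ∪ (X \ Z), V) ∈ betaSet X ∧ MIle s(U,V) s(U ∪ (X \ Z), V) := by
  have hVZ : V ⊆ Z := by rw [← hUn]; exact Finset.subset_union_right
  have hdW : Disjoint (U ∪ (X \ Z)) V := by
    rw [Finset.disjoint_union_left]
    refine ⟨hdUV, Finset.disjoint_left.mpr fun x hx hxV => ?_⟩
    exact (Finset.mem_sdiff.mp hx).2 (hVZ hxV)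
  have hUnX : (U ∪ (X \ Z)) ∪ V = X := by
    rw [Finset.union_right_comm, hUn]
    exact Finset.union_sdiff_of_subset hZX
  refine ⟨⟨_, _, rfl, hU.mono Finset.subset_union_left, hV, hdW, hUnX⟩, ?_⟩
  exact mIle_mk_iff.mpr (Or.inl ⟨Finset.subset_union_left, Finset.Subset.refl _⟩)

/-- If some instance in `β(Z)` is outside `P` and `Z ⊆ X` then some instance in
`β(X)` is outside `P`. -/
lemma not_van_mono {P : Set (MI N)} (hds : IsMIDownSet P) {X Z : PSet N} (hZX : Z ⊆ X)
    {m : MI N} (hmβ : m ∈ betaSet Z) (hmP : m ∉ P) : ∃ m' ∈ betaSet X, m' ∉ P := by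
  obtain ⟨U, V, rfl, hU, hV, hdUV, hUn⟩ := hmβ
  obtain ⟨hβ, hle⟩ := extend_beta hZX hU hV hdUV hUn
  exact ⟨_, hβ, fun hmem => hmP (hds _ _ (isMIInst_mk hU hV hdUV) hmem hle)⟩

/-- If `β(X)` is completely essential and `Z ⊆ X` carries an instance outside `P`,
then `Z = X`. -/
lemma bcess_min {P : Set (MI N)} {X Z : PSet N} (hC : BCEss P X)
    (hZX : Z ⊆ X) {m : MI N} (hmβ : m ∈ betaSet Z) (hmP : m ∉ P) : Z = X := by
  obtain ⟨U, V, rfl, hU, hV, hdUV, hUn⟩ := hmβ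
  obtain ⟨hβ, hle⟩ := extend_beta hZX hU hV hdUV hUn
  have hminX := hC hβ
  have h := hminX.2.2 s(U,V) (isMIInst_mk hU hV hdUV) hmP hle
  rw [Sym2.eq_iff] at h
  rcases h with ⟨h1, _⟩ | ⟨h1, h2⟩
  · have hWU : X \ Z ⊆ U := by rw [h1]; exact Finset.subset_union_right
    apply Finset.Subset.antisymm hZX
    intro x hx
    by_contra hxZ
    have hxU : x ∈ U := hWU (Finset.mem_sdiff.mpr ⟨hx, hxZ⟩)
    exact hxZ (by rw [← hUn]; exact Finset.mem_union_left _ hxU)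
  · obtain ⟨x, hx⟩ := hU
    exact absurd (h1 ▸ hx) (Finset.disjoint_left.mp hdUV hx)

lemma exists_pos_below {v : EntropyVec N} (hv : v.InSAC) (hds : IsMIDownSet v.PMI)
    {X : PSet N} {m : MI N} (hmβ : m ∈ betaSet X) (hmP : m ∉ v.PMI) :
    ∃ Z : PSet N, 2 ≤ Z.card ∧ BPos v.PMI Z ∧ Z ⊆ X := by
  obtain ⟨A, B, rfl, hA, hB, hdAB, hUn⟩ := hmβ
  obtain ⟨U₀, V₀, hU₀, hV₀, hd₀, hmin₀, hsA, hsB⟩ :=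
    exists_minimal_below v.PMI _ A B le_rfl hA hB hdAB hmP
  refine ⟨U₀ ∪ V₀, ?_, minimal_union_pos hv hds hmin₀, ?_⟩
  · rw [Finset.card_union_of_disjoint hd₀]
    have := hU₀.card_pos
    have := hV₀.card_pos
    omega
  · apply Finset.union_subset
    · exact hsA.trans (by rw [← hUn]; exact Finset.subset_union_left)
    · exact hsB.trans (by rw [← hUn]; exact Finset.subset_union_right)

lemma exists_min_pos (P : Set (MI N)) :
    ∀ n : ℕ, ∀ X : PSet N, X.card ≤ n → 2 ≤ X.card → BPos P X →
      ∃ Z : PSet N, Z ⊆ X ∧ 2 ≤ Z.card ∧ BPos P Z ∧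
        ∀ W : PSet N, 2 ≤ W.card → BPos P W → W ⊆ Z → W = Z := by
  intro n
  induction n with
  | zero => intro X h h2 _; omega
  | succ n ih =>
    intro X hn h2 hpos
    by_cases hm : ∀ W : PSet N, 2 ≤ W.card → BPos P W → W ⊆ X → W = X
    · exact ⟨X, Finset.Subset.refl _, h2, hpos, hm⟩
    · push_neg at hm
      obtain ⟨W, hW2, hWpos, hWX, hne⟩ := hm
      have hlt : W.card < X.card :=
        Finset.card_lt_card (Finset.ssubset_iff_subset_ne.mpr ⟨hWX, hne⟩)
      obtain ⟨Z, h1, h2', h3, h4⟩ := ih W (by omega) hW2 hWpos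
      exact ⟨Z, h1.trans hWX, h2', h3, h4⟩

lemma notvan_iff {P : Set (MI N)} {X : PSet N} (h2 : 2 ≤ X.card) :
    (∃ m ∈ betaSet X, m ∉ P) ↔ (BPos P X ∨ BPart P X) := by
  constructor
  · rintro ⟨m, hmβ, hmP⟩
    by_cases h : ∀ m' ∈ betaSet X, m' ∉ P
    · exact Or.inl h
    · push_neg at h
      obtain ⟨m', hm'β, hm'P⟩ := h
      exact Or.inr ⟨⟨m', hm'β, hm'P⟩, ⟨m, hmβ, hmP⟩⟩
  · rintro (h | h)
    · obtain ⟨m, hm⟩ := betaSet_nonempty h2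
      exact ⟨m, hm, h m hm⟩
    · exact h.2

/-- In a positive `X` which is inclusion-minimal positive, any instance below an
element of `β(X)` and outside `P` must equal that element. -/
lemma minpos_sandwich {v : EntropyVec N} (hv : v.InSAC) (hds : IsMIDownSet v.PMI)
    {X A B U V : PSet N} (hpos : BPos v.PMI X)
    (hmin : ∀ W : PSet N, 2 ≤ W.card → BPos v.PMI W → W ⊆ X → W = X)
    (hUn : A ∪ B = X) (hdAB : Disjoint A B)
    (hU : U.Nonempty) (hV : V.Nonempty) (hdUV : Disjoint U V)
    (hm'P : s(U,V) ∉ v.PMI) (hUA : U ⊆ A) (hVB : V ⊆ B) : U = A ∧ V = B := by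
  obtain ⟨U₀, V₀, hU₀, hV₀, hd₀, hmin₀, hsU, hsV⟩ :=
    exists_minimal_below v.PMI _ U V le_rfl hU hV hdUV hm'P
  have hposU : BPos v.PMI (U₀ ∪ V₀) := minimal_union_pos hv hds hmin₀
  have hcard : 2 ≤ (U₀ ∪ V₀).card := by
    rw [Finset.card_union_of_disjoint hd₀]
    have := hU₀.card_pos
    have := hV₀.card_pos
    omega
  have hsubX : U₀ ∪ V₀ ⊆ X := by
    apply Finset.union_subset
    · exact (hsU.trans hUA).trans (by rw [← hUn]; exact Finset.subset_union_left)
    · exact (hsV.trans hVB).trans (by rw [← hUn]; exact Finset.subset_union_right)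
  have hXeq : U₀ ∪ V₀ = X := hmin _ hcard hposU hsubX
  have hAU : A ⊆ U₀ := by
    intro x hx
    have hxX : x ∈ U₀ ∪ V₀ := by rw [hXeq, ← hUn]; exact Finset.mem_union_left _ hx
    rcases Finset.mem_union.mp hxX with h | h
    · exact h
    · exact absurd (hVB (hsV h)) (Finset.disjoint_left.mp hdAB hx)
  have hBV : B ⊆ V₀ := by
    intro x hx
    have hxX : x ∈ U₀ ∪ V₀ := by rw [hXeq, ← hUn]; exact Finset.mem_union_right _ hx
    rcases Finset.mem_union.mp hxX with h | h
    · exact absurd (hUA (hsU h)) (Finset.disjoint_right.mp hdAB hx)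
    · exact h
  exact ⟨Finset.Subset.antisymm hUA (hAU.trans hsU), Finset.Subset.antisymm hVB (hBV.trans hsV)⟩

/-- A minimal positive subsystem has a completely essential β-set. -/
lemma minpos_bcess {v : EntropyVec N} (hv : v.InSAC) (hds : IsMIDownSet v.PMI)
    {X : PSet N} (hpos : BPos v.PMI X)
    (hmin : ∀ W : PSet N, 2 ≤ W.card → BPos v.PMI W → W ⊆ X → W = X) :
    BCEss v.PMI X := by
  intro m hmβ
  obtain ⟨A, B, rfl, hA, hB, hdAB, hUn⟩ := hmβ
  refine ⟨isMIInst_mk hA hB hdAB,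
    hpos _ ((mem_betaSet_mk_iff).mpr ⟨hA, hB, hdAB, hUn⟩), ?_⟩
  intro m' hinst' hm'P hle
  obtain ⟨U, V, rfl, hU, hV, hdUV⟩ := hinst'
  rcases mIle_mk_iff.mp hle with ⟨hUA, hVB⟩ | ⟨hUB, hVA⟩
  · obtain ⟨h1, h2⟩ :=
      minpos_sandwich hv hds hpos hmin hUn hdAB hU hV hdUV hm'P hUA hVB
    rw [h1, h2]
  · obtain ⟨h1, h2⟩ :=
      minpos_sandwich hv hds hpos hmin (by rw [Finset.union_comm]; exact hUn) hdAB.symm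
        hU hV hdUV hm'P hUB hVA
    rw [h1, h2]
    exact Sym2.eq_swap

end Aux3
/-- For every KC-PMI `P`:
(i) the inclusion-minimal subsystems with essential β-sets, and the inclusion-minimal
subsystems with positive β-sets, both coincide with the subsystems with completely
essential β-sets;
(ii) the upward closures (among subsystems of size ≥ 2) of the completely essential,
essential, and positive families all equal the positive-or-partial family;
(iii) the partial family is the upward closure of the positive family minus the
positive family;
(iv) the vanishing family is the complement (within subsystems of size ≥ 2) of the
upward closure of the positive family. -/
theorem statement7 {N : ℕ} (hN : 2 ≤ N) (P : Set (MI N)) (hP : IsKCPMI P) :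
    -- (i)
    (({X : PSet N | 2 ≤ X.card ∧ BEss P X ∧
        ∀ Z : PSet N, 2 ≤ Z.card → BEss P Z → Z ⊆ X → Z = X} =
      {X : PSet N | 2 ≤ X.card ∧ BCEss P X}) ∧
     ({X : PSet N | 2 ≤ X.card ∧ BPos P X ∧
        ∀ Z : PSet N, 2 ≤ Z.card → BPos P Z → Z ⊆ X → Z = X} =
      {X : PSet N | 2 ≤ X.card ∧ BCEss P X})) ∧
    -- (ii)
    (({X : PSet N | 2 ≤ X.card ∧ ∃ Z : PSet N, 2 ≤ Z.card ∧ BCEss P Z ∧ Z ⊆ X} =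
      {X : PSet N | 2 ≤ X.card ∧ (BPos P X ∨ BPart P X)}) ∧
     ({X : PSet N | 2 ≤ X.card ∧ ∃ Z : PSet N, 2 ≤ Z.card ∧ BEss P Z ∧ Z ⊆ X} =
      {X : PSet N | 2 ≤ X.card ∧ (BPos P X ∨ BPart P X)}) ∧
     ({X : PSet N | 2 ≤ X.card ∧ ∃ Z : PSet N, 2 ≤ Z.card ∧ BPos P Z ∧ Z ⊆ X} =
      {X : PSet N | 2 ≤ X.card ∧ (BPos P X ∨ BPart P X)})) ∧
    -- (iii)
    ({X : PSet N | 2 ≤ X.card ∧ BPart P X} =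
      {X : PSet N | 2 ≤ X.card ∧ ∃ Z : PSet N, 2 ≤ Z.card ∧ BPos P Z ∧ Z ⊆ X} \
        {X : PSet N | 2 ≤ X.card ∧ BPos P X}) ∧
    -- (iv)
    ({X : PSet N | 2 ≤ X.card ∧ BVan P X} =
      {X : PSet N | 2 ≤ X.card} \
        {X : PSet N | 2 ≤ X.card ∧ ∃ Z : PSet N, 2 ≤ Z.card ∧ BPos P Z ∧ Z ⊆ X}) := by
  obtain ⟨⟨v, hv, rfl⟩, hds⟩ := hP
  -- two key transfer facts
  have fwd : ∀ X Z : PSet N, 2 ≤ X.card → Z ⊆ X →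
      (∃ m ∈ betaSet Z, m ∉ v.PMI) → BPos v.PMI X ∨ BPart v.PMI X := by
    rintro X Z h2 hZX ⟨m, hmβ, hmP⟩
    obtain ⟨m', h1, h2'⟩ := not_van_mono hds hZX hmβ hmP
    exact (notvan_iff h2).mp ⟨m', h1, h2'⟩
  have bwd : ∀ X : PSet N, 2 ≤ X.card → (BPos v.PMI X ∨ BPart v.PMI X) →
      ∃ Z : PSet N, 2 ≤ Z.card ∧ BCEss v.PMI Z ∧ Z ⊆ X := by
    intro X h2 hor
    obtain ⟨m, hmβ, hmP⟩ := (notvan_iff h2).mpr hor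
    obtain ⟨Z, hZ2, hZpos, hZX⟩ := exists_pos_below hv hds hmβ hmP
    obtain ⟨Z₁, hZ₁Z, hZ₁2, hZ₁pos, hZ₁min⟩ := exists_min_pos v.PMI _ Z le_rfl hZ2 hZpos
    exact ⟨Z₁, hZ₁2, minpos_bcess hv hds hZ₁pos hZ₁min, hZ₁Z.trans hZX⟩
  refine ⟨⟨?_, ?_⟩, ⟨?_, ?_, ?_⟩, ?_, ?_⟩
  · -- (i-a)
    ext X
    simp only [Set.mem_setOf_eq]
    constructor
    · rintro ⟨h2, hEss, hminE⟩
      obtain ⟨m, hmβ, hmA⟩ := hEss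
      obtain ⟨A, B, rfl, hA, hB, hdAB, hUn⟩ := hmβ
      have hpos : BPos v.PMI X := by
        have := minimal_union_pos hv hds hmA
        rwa [hUn] at this
      refine ⟨h2, minpos_bcess hv hds hpos ?_⟩
      intro W hW2 hWpos hWX
      obtain ⟨mW, hmWβ⟩ := betaSet_nonempty hW2
      obtain ⟨U, V, rfl, hU, hV, hdUV, hUnW⟩ := hmWβ
      obtain ⟨U₀, V₀, hU₀, hV₀, hd₀, hmin₀, hsU, hsV⟩ :=
        exists_minimal_below v.PMI _ U V le_rfl hU hV hdUV
          (hWpos _ ((mem_betaSet_mk_iff).mpr ⟨hU, hV, hdUV, hUnW⟩))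
      have hcard : 2 ≤ (U₀ ∪ V₀).card := by
        rw [Finset.card_union_of_disjoint hd₀]
        have := hU₀.card_pos
        have := hV₀.card_pos
        omega
      have hEss₀ : BEss v.PMI (U₀ ∪ V₀) :=
        ⟨s(U₀,V₀), ⟨U₀, V₀, rfl, hU₀, hV₀, hd₀, rfl⟩, hmin₀⟩
      have hsubW : U₀ ∪ V₀ ⊆ W := by
        rw [← hUnW]
        exact Finset.union_subset (hsU.trans Finset.subset_union_left)
          (hsV.trans Finset.subset_union_right)
      have hXeq : U₀ ∪ V₀ = X := hminE _ hcard hEss₀ (hsubW.trans hWX)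
      exact Finset.Subset.antisymm hWX (by rw [← hXeq]; exact hsubW)
    · rintro ⟨h2, hC⟩
      refine ⟨h2, ?_, ?_⟩
      · obtain ⟨m, hmβ⟩ := betaSet_nonempty h2
        exact ⟨m, hmβ, hC hmβ⟩
      · intro Z hZ2 hZe hZX
        obtain ⟨m, hmβ, hmA⟩ := hZe
        exact bcess_min hC hZX hmβ hmA.2.1
  · -- (i-b)
    ext X
    simp only [Set.mem_setOf_eq]
    constructor
    · rintro ⟨h2, hpos, hmin⟩
      exact ⟨h2, minpos_bcess hv hds hpos hmin⟩
    · rintro ⟨h2, hC⟩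
      refine ⟨h2, fun m hm => (hC hm).2.1, ?_⟩
      intro Z hZ2 hZpos hZX
      obtain ⟨m, hmβ⟩ := betaSet_nonempty hZ2
      exact bcess_min hC hZX hmβ (hZpos m hmβ)
  · -- (ii-a)
    ext X
    simp only [Set.mem_setOf_eq]
    constructor
    · rintro ⟨h2, Z, hZ2, hZC, hZX⟩
      obtain ⟨m, hmβ⟩ := betaSet_nonempty hZ2
      exact ⟨h2, fwd X Z h2 hZX ⟨m, hmβ, (hZC hmβ).2.1⟩⟩
    · rintro ⟨h2, hor⟩
      obtain ⟨Z₁, hZ₁2, hC, hsub⟩ := bwd X h2 hor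
      exact ⟨h2, Z₁, hZ₁2, hC, hsub⟩
  · -- (ii-b)
    ext X
    simp only [Set.mem_setOf_eq]
    constructor
    · rintro ⟨h2, Z, hZ2, ⟨m, hmβ, hmA⟩, hZX⟩
      exact ⟨h2, fwd X Z h2 hZX ⟨m, hmβ, hmA.2.1⟩⟩
    · rintro ⟨h2, hor⟩
      obtain ⟨Z₁, hZ₁2, hC, hsub⟩ := bwd X h2 hor
      obtain ⟨m, hmβ⟩ := betaSet_nonempty hZ₁2
      exact ⟨h2, Z₁, hZ₁2, ⟨m, hmβ, hC hmβ⟩, hsub⟩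
  · -- (ii-c)
    ext X
    simp only [Set.mem_setOf_eq]
    constructor
    · rintro ⟨h2, Z, hZ2, hZpos, hZX⟩
      obtain ⟨m, hmβ⟩ := betaSet_nonempty hZ2
      exact ⟨h2, fwd X Z h2 hZX ⟨m, hmβ, hZpos m hmβ⟩⟩
    · rintro ⟨h2, hor⟩
      obtain ⟨Z₁, hZ₁2, hC, hsub⟩ := bwd X h2 hor
      exact ⟨h2, Z₁, hZ₁2, fun m hm => (hC hm).2.1, hsub⟩
  · -- (iii)
    ext X
    simp only [Set.mem_setOf_eq, Set.mem_diff]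
    constructor
    · rintro ⟨h2, hpart⟩
      refine ⟨⟨h2, ?_⟩, ?_⟩
      · obtain ⟨m, hmβ, hmP⟩ := hpart.2
        obtain ⟨Z, hZ2, hZpos, hZX⟩ := exists_pos_below hv hds hmβ hmP
        exact ⟨Z, hZ2, hZpos, hZX⟩
      · rintro ⟨_, hp⟩
        obtain ⟨m, hmβ, hmP⟩ := hpart.1
        exact hp m hmβ hmP
    · rintro ⟨⟨h2, Z, hZ2, hZpos, hZX⟩, hnot⟩
      obtain ⟨m, hmβ⟩ := betaSet_nonempty hZ2
      rcases fwd X Z h2 hZX ⟨m, hmβ, hZpos m hmβ⟩ with h | h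
      · exact absurd ⟨h2, h⟩ hnot
      · exact ⟨h2, h⟩
  · -- (iv)
    ext X
    simp only [Set.mem_setOf_eq, Set.mem_diff]
    constructor
    · rintro ⟨h2, hvan⟩
      refine ⟨h2, ?_⟩
      rintro ⟨_, Z, hZ2, hZpos, hZX⟩
      obtain ⟨m, hmβ⟩ := betaSet_nonempty hZ2
      obtain ⟨m', hm'β, hm'P⟩ := not_van_mono hds hZX hmβ (hZpos m hmβ)
      exact hm'P (hvan hm'β)
    · rintro ⟨h2, hn⟩
      refine ⟨h2, ?_⟩
      intro m hmβ
      by_contra hmP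
      obtain ⟨Z, hZ2, hZpos, hZX⟩ := exists_pos_below hv hds hmβ hmP
      exact hn ⟨h2, Z, hZ2, hZpos, hZX⟩

end HEC
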